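/- With $w_1, w_2, w_3, w_4$ defined as in section 2.2 in terms of the basis $\tilde u_1,\dots,\tilde u_4$, and the skew form $\langle\cdot,\cdot\rangle$ on the free module extended bilinearly over the scalars from the form on the $\tilde u_i$ with $\langle \tilde u_1,\tilde u_4\rangle = C \langle \tilde u_2, \tilde u_3\rangle \ne 0$ and all other pairings among basis vectors zero: one has $\langle w_1, w_2 \rangle = 0$ and $\langle w_1, w_3 \rangle = 0$. Consequently, with $F^1 = Rw_1$, $F^0 = Rw_1 + Rw_2$, $F^{-1} = Rw_1+Rw_2+Rw_3$ over the scalar ring $R$, the orthogonality $\langle F^p, F^{-p}\rangle = 0$ holds for all $p$ (the content being $\langle F^1, F^{-1}\rangle = 0$ and $\langle F^0, F^0 \rangle = 0$). -/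
import Mathlib


/-- Orthogonality (2.2.4): with the skew form satisfying `⟨ũ₁,ũ₄⟩ = C⟨ũ₂,ũ₃⟩ ≠ 0`
and all other basis pairings zero, and `w₁,…,w₄` as in (2.2.1), one has
`⟨w₁,w₂⟩ = 0` and `⟨w₁,w₃⟩ = 0`; consequently `⟨F^p, F^{-p}⟩ = 0` for the filtration
`F¹ = Rw₁ ⊆ F⁰ = Rw₁+Rw₂ ⊆ F⁻¹ = Rw₁+Rw₂+Rw₃`. -/
theorem stmt10 {R M : Type*} [CommRing R] [Algebra ℂ R]
    [AddCommGroup M] [Module R M]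
    (B : M →ₗ[R] M →ₗ[R] R) (hskew : ∀ x y, B x y = -B y x)
    (u : Fin 4 → M) (t : R) (a C lam : ℂ) (c : R) (hc : c ≠ 0)
    (h14 : B (u 0) (u 3) = algebraMap ℂ R C * c) (h23 : B (u 1) (u 2) = c)
    (h12 : B (u 0) (u 1) = 0) (h13 : B (u 0) (u 2) = 0)
    (h24 : B (u 1) (u 3) = 0) (h34 : B (u 2) (u 3) = 0)
    (hdiag : ∀ i, B (u i) (u i) = 0)
    (w1 w2 w3 w4 : M)
    (hw1 : w1 = u 0 + (algebraMap ℂ R (C * lam) * t) •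
        (u 1 + algebraMap ℂ R a • u 2 + (algebraMap ℂ R (lam / 2) * t) • u 3))
    (hw2 : w2 = u 1 + algebraMap ℂ R (a - 1) • u 2 + (algebraMap ℂ R lam * t) • u 3)
    (hw3 : w3 = -u 2 + (algebraMap ℂ R lam * t) • u 3)
    (hw4 : w4 = u 3) :
    B w1 w2 = 0 ∧ B w1 w3 = 0 ∧
    (∀ x ∈ Submodule.span R ({w1} : Set M),
      ∀ y ∈ Submodule.span R ({w1, w2, w3} : Set M), B x y = 0) ∧
    (∀ x ∈ Submodule.span R ({w1, w2} : Set M),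
      ∀ y ∈ Submodule.span R ({w1, w2} : Set M), B x y = 0) := by
  have hdiag' : ∀ x, B x x = 0 := by
    intro x
    have h : B x x + B x x = 0 := by linear_combination hskew x x
    have h2 : algebraMap ℂ R 2 * B x x = 0 := by rw [map_ofNat]; linear_combination h
    have h3 := congrArg (fun r => algebraMap ℂ R (2⁻¹ : ℂ) * r) h2
    simp only [mul_zero, ← mul_assoc, ← map_mul] at h3
    norm_num at h3
    exact h3
  have h21 : B (u 1) (u 0) = 0 := by rw [hskew, h12, neg_zero]
  have h31 : B (u 2) (u 0) = 0 := by rw [hskew, h13, neg_zero]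
  have h32 : B (u 2) (u 1) = -c := by rw [hskew, h23]
  have h41 : B (u 3) (u 0) = by exact -(algebraMap ℂ R C * c) := by rw [hskew, h14]
  have h42 : B (u 3) (u 1) = 0 := by rw [hskew, h24, neg_zero]
  have h43 : B (u 3) (u 2) = 0 := by rw [hskew, h34, neg_zero]
  have hB12 : B w1 w2 = 0 := by
    subst hw1 hw2
    simp only [map_add, map_smul, LinearMap.add_apply, LinearMap.smul_apply,
      h12, h13, h14, h23, h24, h34, h21, h31, h32, h42, h43, hdiag, smul_eq_mul,
      map_mul, map_sub, map_one, map_div₀, map_ofNat]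
    ring
  have hB13 : B w1 w3 = 0 := by
    subst hw1 hw3
    simp only [map_add, map_neg, map_smul, LinearMap.add_apply, LinearMap.neg_apply,
      LinearMap.smul_apply,
      h12, h13, h14, h23, h24, h34, h21, h31, h32, h42, h43, hdiag, smul_eq_mul,
      map_mul, map_sub, map_one, map_div₀, map_ofNat]
    ring
  have hB21 : B w2 w1 = 0 := by rw [hskew, hB12, neg_zero]
  have main : ∀ (S T : Set M), (∀ s ∈ S, ∀ r ∈ T, B s r = 0) →
      ∀ x ∈ Submodule.span R S, ∀ y ∈ Submodule.span R T, B x y = 0 := by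
    intro S T h x hx
    induction hx using Submodule.span_induction with
    | mem s hs =>
      intro y hy
      induction hy using Submodule.span_induction with
      | mem r hr => exact h s hs r hr
      | zero => simp
      | add y z _ _ hy hz => simp [hy, hz]
      | smul r y _ hy => simp [hy]
    | zero => intro y hy; simp
    | add x z _ _ hx hz => intro y hy; simp [hx y hy, hz y hy]
    | smul r x _ hx => intro y hy; simp [hx y hy]
  refine ⟨hB12, hB13, ?_, ?_⟩
  · refine main _ _ ?_
    rintro s hs r hr
    simp only [Set.mem_singleton_iff] at hs
    simp only [Set.mem_insert_iff, Set.mem_singleton_iff] at hr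
    rcases hs with rfl
    rcases hr with rfl | rfl | rfl
    · exact hdiag' _
    · assumption
    · assumption
  · refine main _ _ ?_
    rintro s hs r hr
    simp only [Set.mem_insert_iff, Set.mem_singleton_iff] at hs hr
    rcases hs with rfl | rfl <;> rcases hr with rfl | rfl
    · exact hdiag' _
    · assumption
    · assumption
    · exact hdiag' _
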